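/- Let n ≥ 1, let μ_1, …, μ_K ∈ [0,1], let G_1, …, G_K be independent random variables with G_j distributed as Binomial(n, μ_j), let Q_1, …, Q_K be i.i.d. real-valued random variables with common distribution ν, and suppose the family (G_1,…,G_K,Q_1,…,Q_K) is mutually independent. Then: (i) for any indices j1, j2 with μ_{j1} ≤ μ_{j2}, P[−G_{j1}+Q_{j1} > max_{j ≠ j1}(−G_j+Q_j)] ≥ P[−G_{j2}+Q_{j2} > max_{j ≠ j2}(−G_j+Q_j)]; (ii) if additionally μ_1 ≤ μ_2 ≤ ⋯ ≤ μ_K, then for every j, P[−G_j+Q_j > max_{i ≠ j}(−G_i+Q_i)] ≤ 1/j. -/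

import Mathlib

open MeasureTheory ProbabilityTheory
open scoped ENNReal

/-- The binomial distribution with `n` trials and success probability `p`, as a measure on `ℝ`
supported on `{0, 1, ..., n}`. -/
noncomputable def binomialMeasureReal (n : ℕ) (p : ℝ) : Measure ℝ :=
  ∑ k ∈ Finset.range (n + 1),
    (ENNReal.ofReal ((n.choose k : ℝ) * p ^ k * (1 - p) ^ (n - k))) • Measure.dirac (k : ℝ)


section RNMaux
open Finset
variable {n : ℕ} {p q : ℝ}

-- Vandermonde-style marginal identities for the binomial coupling
lemma RNM_M2 (p q : ℝ) (n b : ℕ) (hb : b ≤ n) :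
    ∑ a ∈ range (n+1),
      ((n.choose b : ℝ) * (b.choose a : ℝ) * (p^a * ((q-p)^(b-a) * (1-q)^(n-b))))
      = (n.choose b : ℝ) * q^b * (1-q)^(n-b) := by
  rw [← Finset.sum_subset (Finset.range_subset_range.mpr (by omega) : range (b+1) ⊆ range (n+1))
      (fun a _ ha => by
        have hba : b < a := by simpa using ha
        simp [Nat.choose_eq_zero_of_lt hba])]
  have : ∑ a ∈ range (b+1),
      ((n.choose b : ℝ) * (b.choose a : ℝ) * (p^a * ((q-p)^(b-a) * (1-q)^(n-b))))
      = ((n.choose b : ℝ) * (1-q)^(n-b)) * ∑ a ∈ range (b+1), p^a * (q-p)^(b-a) * (b.choose a : ℝ) := by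
    rw [Finset.mul_sum]; exact Finset.sum_congr rfl fun a _ => by ring
  rw [this, ← add_pow]
  have : p + (q - p) = q := by ring
  rw [this]; ring

lemma RNM_M1 (p q : ℝ) (n a : ℕ) (ha : a ≤ n) :
    ∑ b ∈ range (n+1),
      ((n.choose b : ℝ) * (b.choose a : ℝ) * (p^a * ((q-p)^(b-a) * (1-q)^(n-b))))
      = (n.choose a : ℝ) * p^a * (1-p)^(n-a) := by
  rw [← Finset.sum_subset (by intro x hx; simp at hx ⊢; omega : Finset.Ico a (n+1) ⊆ range (n+1))
      (fun b hbm hb => by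
        have hba : b < a := by simp at hbm hb; omega
        simp [Nat.choose_eq_zero_of_lt hba])]
  rw [Finset.sum_Ico_eq_sum_range]
  have hrange : n + 1 - a = (n - a) + 1 := by omega
  rw [hrange]
  have hterm : ∀ t ∈ range ((n-a)+1),
      ((n.choose (a+t) : ℝ) * ((a+t).choose a : ℝ) * (p^a * ((q-p)^((a+t)-a) * (1-q)^(n-(a+t)))))
      = ((n.choose a : ℝ) * p^a) * ((q-p)^t * (1-q)^((n-a)-t) * ((n-a).choose t : ℝ)) := by
    intro t ht
    have h1 : a + t ≤ n := by simp at ht; omega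
    have hcc : (n.choose (a+t)) * ((a+t).choose a) = (n.choose a) * ((n-a).choose t) := by
      have := Nat.choose_mul (n := n) (Nat.le_add_right a t)
      rw [show a + t - a = t from by omega] at this; exact this
    have hcc' : ((n.choose (a+t)) : ℝ) * ((a+t).choose a : ℝ) = (n.choose a : ℝ) * ((n-a).choose t : ℝ) := by
      exact_mod_cast congrArg (Nat.cast : ℕ → ℝ) hcc
    have e1 : (a+t) - a = t := by omega
    have e2 : n - (a+t) = (n-a) - t := by omega
    rw [e1, e2, hcc']; ring
  rw [Finset.sum_congr rfl hterm, ← Finset.mul_sum, ← add_pow]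
  have : q - p + (1 - q) = 1 - p := by ring
  rw [this]

private noncomputable def RNMw (n : ℕ) (r : ℝ) (k : ℕ) : ℝ≥0∞ :=
  ENNReal.ofReal ((n.choose k : ℝ) * r^k * (1-r)^(n-k))

private noncomputable def RNMc (n : ℕ) (p q : ℝ) (a b : ℕ) : ℝ≥0∞ :=
  ENNReal.ofReal ((n.choose b : ℝ) * (b.choose a : ℝ) * (p^a * ((q-p)^(b-a) * (1-q)^(n-b))))

lemma RNMc_nonneg (hp : 0 ≤ p) (hpq : p ≤ q) (hq : q ≤ 1) (a b : ℕ) :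
    0 ≤ (n.choose b : ℝ) * (b.choose a : ℝ) * (p^a * ((q-p)^(b-a) * (1-q)^(n-b))) := by
  have h1 : (0:ℝ) ≤ q - p := sub_nonneg.mpr hpq
  have h2 : (0:ℝ) ≤ 1 - q := sub_nonneg.mpr hq
  positivity

lemma RNMc_marg1 (hp : 0 ≤ p) (hpq : p ≤ q) (hq : q ≤ 1) {a : ℕ} (ha : a ∈ range (n+1)) :
    ∑ b ∈ range (n+1), RNMc n p q a b = RNMw n p a := by
  simp only [RNMc, RNMw]
  rw [← ENNReal.ofReal_sum_of_nonneg (fun b _ => RNMc_nonneg hp hpq hq a b),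
    RNM_M1 p q n a (by simp at ha; omega)]

lemma RNMc_marg2 (hp : 0 ≤ p) (hpq : p ≤ q) (hq : q ≤ 1) {b : ℕ} (hb : b ∈ range (n+1)) :
    ∑ a ∈ range (n+1), RNMc n p q a b = RNMw n q b := by
  simp only [RNMc, RNMw]
  rw [← ENNReal.ofReal_sum_of_nonneg (fun a _ => RNMc_nonneg hp hpq hq a b),
    RNM_M2 p q n b (by simp at hb; omega)]

lemma RNMc_eq_zero {a b : ℕ} (hab : b < a) : RNMc n p q a b = 0 := by
  simp [RNMc, Nat.choose_eq_zero_of_lt hab]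

/-- stochastic dominance of binomial weights: monotone test functions -/
lemma RNM_sum_mono (hp : 0 ≤ p) (hpq : p ≤ q) (hq : q ≤ 1) (h : ℕ → ℝ≥0∞)
    (hh : ∀ a b : ℕ, a ≤ b → h a ≤ h b) :
    ∑ k ∈ range (n+1), RNMw n p k * h k ≤ ∑ k ∈ range (n+1), RNMw n q k * h k := by
  calc ∑ k ∈ range (n+1), RNMw n p k * h k
      = ∑ a ∈ range (n+1), ∑ b ∈ range (n+1), RNMc n p q a b * h a := by
        refine Finset.sum_congr rfl fun a ha => ?_
        rw [← Finset.sum_mul, RNMc_marg1 hp hpq hq ha]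
    _ ≤ ∑ a ∈ range (n+1), ∑ b ∈ range (n+1), RNMc n p q a b * h b := by
        refine Finset.sum_le_sum fun a _ => Finset.sum_le_sum fun b _ => ?_
        rcases le_or_gt a b with hab | hab
        · exact mul_le_mul_right (hh a b hab) _
        · simp [RNMc_eq_zero hab]
    _ = ∑ k ∈ range (n+1), RNMw n q k * h k := by
        rw [Finset.sum_comm]
        refine Finset.sum_congr rfl fun b hb => ?_
        rw [← Finset.sum_mul, RNMc_marg2 hp hpq hq hb]

/-- stochastic dominance of binomial weights: antitone test functions -/
lemma RNM_sum_anti (hp : 0 ≤ p) (hpq : p ≤ q) (hq : q ≤ 1) (h : ℕ → ℝ≥0∞)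
    (hh : ∀ a b : ℕ, a ≤ b → h b ≤ h a) :
    ∑ k ∈ range (n+1), RNMw n q k * h k ≤ ∑ k ∈ range (n+1), RNMw n p k * h k := by
  calc ∑ k ∈ range (n+1), RNMw n q k * h k
      = ∑ a ∈ range (n+1), ∑ b ∈ range (n+1), RNMc n p q a b * h b := by
        rw [Finset.sum_comm]
        refine Finset.sum_congr rfl fun b hb => ?_
        rw [← Finset.sum_mul, RNMc_marg2 hp hpq hq hb]
    _ ≤ ∑ a ∈ range (n+1), ∑ b ∈ range (n+1), RNMc n p q a b * h a := by
        refine Finset.sum_le_sum fun a _ => Finset.sum_le_sum fun b _ => ?_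
        rcases le_or_gt a b with hab | hab
        · exact mul_le_mul_right (hh a b hab) _
        · simp [RNMc_eq_zero hab]
    _ = ∑ k ∈ range (n+1), RNMw n p k * h k := by
        refine Finset.sum_congr rfl fun a ha => ?_
        rw [← Finset.sum_mul, RNMc_marg1 hp hpq hq ha]

lemma RNM_lintegral_binomial (n : ℕ) (r : ℝ) (f : ℝ → ℝ≥0∞) (hf : Measurable f) :
    ∫⁻ x, f x ∂(binomialMeasureReal n r) = ∑ k ∈ range (n+1), RNMw n r k * f k := by
  rw [binomialMeasureReal, lintegral_finset_sum_measure]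
  refine Finset.sum_congr rfl fun k _ => ?_
  rw [lintegral_smul_measure, lintegral_dirac' _ hf]
  rfl

lemma RNM_lintegral_anti {n : ℕ} {p q : ℝ} (hp : 0 ≤ p) (hpq : p ≤ q) (hq : q ≤ 1)
    (f : ℝ → ℝ≥0∞) (hf : Measurable f) (hanti : ∀ x y : ℝ, x ≤ y → f y ≤ f x) :
    ∫⁻ x, f x ∂(binomialMeasureReal n q) ≤ ∫⁻ x, f x ∂(binomialMeasureReal n p) := by
  rw [RNM_lintegral_binomial n q f hf, RNM_lintegral_binomial n p f hf]
  exact RNM_sum_anti hp hpq hq (fun k => f k)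
    (fun a b hab => hanti a b (by exact_mod_cast hab))

lemma RNM_lintegral_mono {n : ℕ} {p q : ℝ} (hp : 0 ≤ p) (hpq : p ≤ q) (hq : q ≤ 1)
    (f : ℝ → ℝ≥0∞) (hf : Measurable f) (hmono : ∀ x y : ℝ, x ≤ y → f x ≤ f y) :
    ∫⁻ x, f x ∂(binomialMeasureReal n p) ≤ ∫⁻ x, f x ∂(binomialMeasureReal n q) := by
  rw [RNM_lintegral_binomial n q f hf, RNM_lintegral_binomial n p f hf]
  exact RNM_sum_mono hp hpq hq (fun k => f k)
    (fun a b hab => hmono a b (by exact_mod_cast hab))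

/-- dominance of the convolved laws on monotone test functions -/
lemma RNM_rho_mono {n : ℕ} {p q : ℝ} (hp : 0 ≤ p) (hpq : p ≤ q) (hq : q ≤ 1)
    (ν : Measure ℝ) [SigmaFinite ν] (g : ℝ → ℝ≥0∞) (hg : Measurable g)
    (hmono : Monotone g) :
    ∫⁻ x, g x ∂(Measure.map (fun z : ℝ × ℝ => -z.1 + z.2) ((binomialMeasureReal n q).prod ν)) ≤
      ∫⁻ x, g x ∂(Measure.map (fun z : ℝ × ℝ => -z.1 + z.2) ((binomialMeasureReal n p).prod ν)) := by
  have hsub : Measurable (fun z : ℝ × ℝ => -z.1 + z.2) := measurable_fst.neg.add measurable_snd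
  rw [lintegral_map hg hsub, lintegral_map hg hsub,
    lintegral_prod (fun z : ℝ × ℝ => g (-z.1 + z.2)) (hg.comp hsub).aemeasurable,
    lintegral_prod (fun z : ℝ × ℝ => g (-z.1 + z.2)) (hg.comp hsub).aemeasurable]
  refine RNM_lintegral_anti hp hpq hq _ ?_ ?_
  · exact Measurable.lintegral_prod_right' (f := fun z : ℝ × ℝ => g (-z.1 + z.2)) (hg.comp hsub)
  · intro x y hxy
    exact lintegral_mono fun b => hmono (by linarith)

/-- CDF comparison of the convolved laws -/
lemma RNM_rho_cdf {n : ℕ} {p q : ℝ} (hp : 0 ≤ p) (hpq : p ≤ q) (hq : q ≤ 1)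
    (ν : Measure ℝ) [SigmaFinite ν] (x : ℝ) :
    (Measure.map (fun z : ℝ × ℝ => -z.1 + z.2) ((binomialMeasureReal n p).prod ν)) (Set.Iio x) ≤
      (Measure.map (fun z : ℝ × ℝ => -z.1 + z.2) ((binomialMeasureReal n q).prod ν)) (Set.Iio x) := by
  have hsub : Measurable (fun z : ℝ × ℝ => -z.1 + z.2) := measurable_fst.neg.add measurable_snd
  rw [Measure.map_apply hsub measurableSet_Iio, Measure.map_apply hsub measurableSet_Iio,
    Measure.prod_apply (hsub measurableSet_Iio), Measure.prod_apply (hsub measurableSet_Iio)]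
  have hset : ∀ a : ℝ, (Prod.mk a ⁻¹' ((fun z : ℝ × ℝ => -z.1 + z.2) ⁻¹' Set.Iio x)) = Set.Iio (x + a) := by
    intro a; ext b; simp [Set.mem_Iio]; constructor <;> intro h <;> linarith
  simp_rw [hset]
  refine RNM_lintegral_mono hp hpq hq (fun a => ν (Set.Iio (x + a))) ?_ ?_
  · exact Monotone.measurable (fun a b hab => measure_mono (Set.Iio_subset_Iio (by linarith)))
  · intro a b hab
    exact measure_mono (Set.Iio_subset_Iio (by linarith))

private lemma RNM_measSet_forall_lt {α : Type*} [MeasurableSpace α] {ι : Type*} [Countable ι]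
    (f : ι → α → ℝ) (hf : ∀ i, Measurable (f i)) (g : α → ℝ) (hg : Measurable g) (P : ι → Prop) :
    MeasurableSet {z : α | ∀ i, P i → f i z < g z} := by
  have h : {z : α | ∀ i, P i → f i z < g z} = ⋂ i, {z : α | P i → f i z < g z} := by
    ext z; simp [Set.mem_iInter]
  rw [h]
  refine MeasurableSet.iInter fun i => ?_
  by_cases hPi : P i
  · simpa [hPi] using measurableSet_lt (hf i) hg
  · simp [hPi]


end RNMaux

set_option maxHeartbeats 2000000 in
/-- Monotonicity of report-noisy-max on Bernoulli-resampled accumulated losses: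
(i) an action with smaller mean loss is selected with larger probability;
(ii) if the means are sorted increasingly, the `j`-th action (1-based) is selected with
probability at most `1/j`. -/
theorem reportNoisyMax_binomial_monotone {Ω : Type*} [MeasurableSpace Ω] (μ : Measure Ω)
    [IsProbabilityMeasure μ] {K : ℕ} (n : ℕ) (hn : 1 ≤ n)
    (μs : Fin K → ℝ) (hμs : ∀ j, μs j ∈ Set.Icc (0 : ℝ) 1)
    (G Q : Fin K → Ω → ℝ)
    (hG : ∀ j, Measurable (G j)) (hQ : ∀ j, Measurable (Q j))
    (hGdist : ∀ j, Measure.map (G j) μ = binomialMeasureReal n (μs j))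
    (ν : Measure ℝ) [IsProbabilityMeasure ν]
    (hQdist : ∀ j, Measure.map (Q j) μ = ν)
    (hIndep : iIndepFun (Sum.elim G Q) μ) :
    (∀ j1 j2 : Fin K, μs j1 ≤ μs j2 →
        μ {ω | ∀ j, j ≠ j1 → -G j ω + Q j ω < -G j1 ω + Q j1 ω} ≥
          μ {ω | ∀ j, j ≠ j2 → -G j ω + Q j ω < -G j2 ω + Q j2 ω}) ∧
      (Monotone μs → ∀ j : Fin K,
        μ {ω | ∀ i, i ≠ j → -G i ω + Q i ω < -G j ω + Q j ω} ≤ (((j : ℕ) : ℝ≥0∞) + 1)⁻¹) := by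
  classical
  have hSQ : ∀ i : Fin K ⊕ Fin K, Measurable (Sum.elim G Q i) := by
    rintro (j | j)
    exacts [hG j, hQ j]
  set V : Fin K → Ω → ℝ := fun j ω => -G j ω + Q j ω with hVdef
  have hV : ∀ j, Measurable (V j) := fun j => (hG j).neg.add (hQ j)
  -- extension maps and grouped tuples
  let eT : (T : Finset (Fin K ⊕ Fin K)) → (T → ℝ) → (Fin K ⊕ Fin K) → ℝ :=
    fun T v i => if h : i ∈ T then v ⟨i, h⟩ else 0
  have heT : ∀ T, Measurable (eT T) := by
    intro T
    refine measurable_pi_lambda _ fun i => ?_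
    by_cases h : i ∈ T
    · simpa only [eT, h, dif_pos] using measurable_pi_apply (⟨i, h⟩ : T)
    · simpa only [eT, h, dif_neg, not_false_iff] using measurable_const
  let Z : Finset (Fin K ⊕ Fin K) → Ω → (Fin K ⊕ Fin K) → ℝ :=
    fun T ω => eT T (fun i : T => Sum.elim G Q i ω)
  have hZmeas : ∀ T, Measurable (Z T) :=
    fun T => (heT T).comp (measurable_pi_lambda _ fun i => hSQ i)
  have hZval : ∀ (T) (ω) (i), i ∈ T → Z T ω i = Sum.elim G Q i ω := by
    intro T ω i h; simp only [Z, eT, h, dif_pos]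
  have hZindep : ∀ S T, Disjoint S T → IndepFun (Z S) (Z T) μ := by
    intro S T h
    exact (hIndep.indepFun_finset S T h hSQ).comp (heT S) (heT T)
  -- marginal laws
  set ρ : Fin K → Measure ℝ := fun j =>
    Measure.map (fun z : ℝ × ℝ => -z.1 + z.2) ((binomialMeasureReal n (μs j)).prod ν) with hρdef
  have hsub2 : Measurable (fun z : ℝ × ℝ => -z.1 + z.2) := measurable_fst.neg.add measurable_snd
  have hVlaw : ∀ j, Measure.map (V j) μ = ρ j := by
    intro j
    have hind : IndepFun (G j) (Q j) μ :=
      hIndep.indepFun (show (Sum.inl j : Fin K ⊕ Fin K) ≠ Sum.inr j by simp)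
    have hpair : Measure.map (fun ω => (G j ω, Q j ω)) μ
        = (binomialMeasureReal n (μs j)).prod ν := by
      rw [(indepFun_iff_map_prod_eq_prod_map_map (hG j).aemeasurable (hQ j).aemeasurable).1 hind,
        hGdist j, hQdist j]
    calc Measure.map (V j) μ
        = Measure.map ((fun z : ℝ × ℝ => -z.1 + z.2) ∘ (fun ω => (G j ω, Q j ω))) μ := rfl
      _ = Measure.map (fun z : ℝ × ℝ => -z.1 + z.2)
            (Measure.map (fun ω => (G j ω, Q j ω)) μ) :=
          (Measure.map_map hsub2 ((hG j).prodMk (hQ j))).symm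
      _ = ρ j := by rw [hpair]
  have hρprob : ∀ j, IsProbabilityMeasure (ρ j) := by
    intro j; rw [← hVlaw j]; exact Measure.isProbabilityMeasure_map (hV j).aemeasurable
  -- Step 1: conditioning on the selected coordinate
  have key : ∀ j0 : Fin K,
      μ {ω | ∀ j, j ≠ j0 → -G j ω + Q j ω < -G j0 ω + Q j0 ω}
        = ∫⁻ x, μ {ω | ∀ j, j ≠ j0 → V j ω < x} ∂(ρ j0) := by
    intro j0
    have hdisj : Disjoint ({Sum.inl j0, Sum.inr j0} : Finset (Fin K ⊕ Fin K))
        ({Sum.inl j0, Sum.inr j0} : Finset (Fin K ⊕ Fin K))ᶜ := disjoint_compl_right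
    have hindZ := hZindep _ _ hdisj
    have hmem1 : (Sum.inl j0 : Fin K ⊕ Fin K) ∈ ({Sum.inl j0, Sum.inr j0} : Finset _) := by simp
    have hmem2 : (Sum.inr j0 : Fin K ⊕ Fin K) ∈ ({Sum.inl j0, Sum.inr j0} : Finset _) := by simp
    have hVZ : V j0 = (fun y : (Fin K ⊕ Fin K) → ℝ => -y (Sum.inl j0) + y (Sum.inr j0))
        ∘ Z {Sum.inl j0, Sum.inr j0} := by
      funext ω
      simp only [Function.comp_apply, hZval _ ω _ hmem1, hZval _ ω _ hmem2, hVdef, Sum.elim_inl,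
        Sum.elim_inr]
    have hyInd : IndepFun (V j0) (Z ({Sum.inl j0, Sum.inr j0} : Finset _)ᶜ) μ := by
      rw [hVZ]
      exact hindZ.comp ((measurable_pi_apply _).neg.add (measurable_pi_apply _)) measurable_id
    have hmapprod : μ.map (fun ω => (V j0 ω, Z ({Sum.inl j0, Sum.inr j0} : Finset _)ᶜ ω))
        = (μ.map (V j0)).prod (μ.map (Z ({Sum.inl j0, Sum.inr j0} : Finset _)ᶜ)) :=
      (indepFun_iff_map_prod_eq_prod_map_map (hV j0).aemeasurable
        (hZmeas _).aemeasurable).1 hyInd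
    have hUm : MeasurableSet {z : ℝ × ((Fin K ⊕ Fin K) → ℝ) |
        ∀ j, j ≠ j0 → -z.2 (Sum.inl j) + z.2 (Sum.inr j) < z.1} := by
      refine RNM_measSet_forall_lt _ (fun j => ?_) _ measurable_fst _
      exact ((measurable_pi_apply _).comp measurable_snd).neg.add
        ((measurable_pi_apply _).comp measurable_snd)
    have hmemT : ∀ j : Fin K, j ≠ j0 →
        ((Sum.inl j : Fin K ⊕ Fin K) ∈ ({Sum.inl j0, Sum.inr j0} : Finset _)ᶜ ∧
         (Sum.inr j : Fin K ⊕ Fin K) ∈ ({Sum.inl j0, Sum.inr j0} : Finset _)ᶜ) := by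
      intro j hj
      constructor <;> simp [Finset.mem_compl, hj]
    have hpre : {ω | ∀ j, j ≠ j0 → -G j ω + Q j ω < -G j0 ω + Q j0 ω}
        = (fun ω => (V j0 ω, Z ({Sum.inl j0, Sum.inr j0} : Finset _)ᶜ ω)) ⁻¹'
          {z : ℝ × ((Fin K ⊕ Fin K) → ℝ) |
            ∀ j, j ≠ j0 → -z.2 (Sum.inl j) + z.2 (Sum.inr j) < z.1} := by
      ext ω
      simp only [Set.mem_setOf_eq, Set.mem_preimage]
      refine forall_congr' fun j => imp_congr_right fun hj => ?_
      rw [hZval _ ω _ (hmemT j hj).1, hZval _ ω _ (hmemT j hj).2]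
      rfl
    haveI := Measure.isProbabilityMeasure_map (hZmeas ({Sum.inl j0, Sum.inr j0} : Finset _)ᶜ).aemeasurable
      (μ := μ)
    rw [hpre, ← Measure.map_apply ((hV j0).prodMk (hZmeas _)) hUm, hmapprod,
      Measure.prod_apply hUm, hVlaw j0]
    refine lintegral_congr fun x => ?_
    have hYm : MeasurableSet {y : (Fin K ⊕ Fin K) → ℝ |
        ∀ j, j ≠ j0 → -y (Sum.inl j) + y (Sum.inr j) < x} := by
      refine RNM_measSet_forall_lt _ (fun j => ?_) _ measurable_const _
      exact (measurable_pi_apply _).neg.add (measurable_pi_apply _)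
    have hpreY : Prod.mk x ⁻¹' {z : ℝ × ((Fin K ⊕ Fin K) → ℝ) |
          ∀ j, j ≠ j0 → -z.2 (Sum.inl j) + z.2 (Sum.inr j) < z.1}
        = {y : (Fin K ⊕ Fin K) → ℝ | ∀ j, j ≠ j0 → -y (Sum.inl j) + y (Sum.inr j) < x} := rfl
    rw [hpreY, Measure.map_apply (hZmeas _) hYm]
    congr 1
    ext ω
    simp only [Set.mem_preimage, Set.mem_setOf_eq]
    refine forall_congr' fun j => imp_congr_right fun hj => ?_
    rw [hZval _ ω _ (hmemT j hj).1, hZval _ ω _ (hmemT j hj).2]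
    rfl
  -- Step 2: factorization of the conditional probability
  have fact : ∀ a b : Fin K, a ≠ b → ∀ x : ℝ,
      μ {ω | ∀ j, j ≠ a → V j ω < x}
        = μ {ω | V b ω < x} * μ {ω | ∀ i, ¬(i = a ∨ i = b) → V i ω < x} := by
    intro a b hab x
    have hsubS : ({Sum.inl b, Sum.inr b} : Finset (Fin K ⊕ Fin K))
        ⊆ ({Sum.inl a, Sum.inr a, Sum.inl b, Sum.inr b} : Finset _) := by
      intro i hi; simp at hi; rcases hi with h | h <;> simp [h]
    have hdisj : Disjoint ({Sum.inl b, Sum.inr b} : Finset (Fin K ⊕ Fin K))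
        ({Sum.inl a, Sum.inr a, Sum.inl b, Sum.inr b} : Finset _)ᶜ :=
      disjoint_compl_right.mono_left hsubS
    have hindZ := hZindep _ _ hdisj
    have hmA : MeasurableSet {y : (Fin K ⊕ Fin K) → ℝ | -y (Sum.inl b) + y (Sum.inr b) < x} :=
      measurableSet_lt ((measurable_pi_apply (Sum.inl b : Fin K ⊕ Fin K)).neg.add
        (measurable_pi_apply (Sum.inr b : Fin K ⊕ Fin K))) measurable_const
    have hmB : MeasurableSet {y : (Fin K ⊕ Fin K) → ℝ |
        ∀ i, ¬(i = a ∨ i = b) → -y (Sum.inl i) + y (Sum.inr i) < x} := by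
      refine RNM_measSet_forall_lt _ (fun i => ?_) _ measurable_const _
      exact (measurable_pi_apply _).neg.add (measurable_pi_apply _)
    have heq := (indepFun_iff_measure_inter_preimage_eq_mul.mp hindZ) _ _ hmA hmB
    have hmembS : ((Sum.inl b : Fin K ⊕ Fin K) ∈ ({Sum.inl b, Sum.inr b} : Finset _) ∧
        (Sum.inr b : Fin K ⊕ Fin K) ∈ ({Sum.inl b, Sum.inr b} : Finset _)) := by
      constructor <;> simp
    have hmembT : ∀ i : Fin K, ¬(i = a ∨ i = b) →
        ((Sum.inl i : Fin K ⊕ Fin K) ∈ ({Sum.inl a, Sum.inr a, Sum.inl b, Sum.inr b} : Finset _)ᶜ ∧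
         (Sum.inr i : Fin K ⊕ Fin K) ∈ ({Sum.inl a, Sum.inr a, Sum.inl b, Sum.inr b} : Finset _)ᶜ) := by
      intro i hi
      push_neg at hi
      constructor <;> simp [Finset.mem_compl, hi.1, hi.2]
    have hA : Z ({Sum.inl b, Sum.inr b} : Finset _) ⁻¹'
        {y : (Fin K ⊕ Fin K) → ℝ | -y (Sum.inl b) + y (Sum.inr b) < x} = {ω | V b ω < x} := by
      ext ω
      simp only [Set.mem_preimage, Set.mem_setOf_eq,
        hZval _ ω _ hmembS.1, hZval _ ω _ hmembS.2]
      rfl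
    have hB : Z ({Sum.inl a, Sum.inr a, Sum.inl b, Sum.inr b} : Finset _)ᶜ ⁻¹'
        {y : (Fin K ⊕ Fin K) → ℝ | ∀ i, ¬(i = a ∨ i = b) → -y (Sum.inl i) + y (Sum.inr i) < x}
        = {ω | ∀ i, ¬(i = a ∨ i = b) → V i ω < x} := by
      ext ω
      simp only [Set.mem_preimage, Set.mem_setOf_eq]
      refine forall_congr' fun i => imp_congr_right fun hi => ?_
      rw [hZval _ ω _ (hmembT i hi).1, hZval _ ω _ (hmembT i hi).2]
      rfl
    rw [hA, hB] at heq
    rw [← heq]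
    congr 1
    ext ω
    simp only [Set.mem_setOf_eq, Set.mem_inter_iff]
    constructor
    · intro h
      refine ⟨h b (Ne.symm hab), fun i hi => h i ?_⟩
      push_neg at hi; exact hi.1
    · rintro ⟨h1, h2⟩ j hj
      by_cases hjb : j = b
      · subst hjb; exact h1
      · exact h2 j (by push_neg; exact ⟨hj, hjb⟩)
  -- Part (i)
  have part1 : ∀ j1 j2 : Fin K, μs j1 ≤ μs j2 →
      μ {ω | ∀ j, j ≠ j1 → -G j ω + Q j ω < -G j1 ω + Q j1 ω} ≥
        μ {ω | ∀ j, j ≠ j2 → -G j ω + Q j ω < -G j2 ω + Q j2 ω} := by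
    intro j1 j2 hle
    by_cases hj : j1 = j2
    · subst hj; exact le_refl _
    · rw [key j1, key j2]
      have hDmono : Monotone (fun x => μ {ω | ∀ i, ¬(i = j1 ∨ i = j2) → V i ω < x}) := by
        intro x y hxy
        exact measure_mono fun ω h i hi => lt_of_lt_of_le (h i hi) hxy
      have hφmono : ∀ j : Fin K, Monotone (fun x => ρ j (Set.Iio x)) := by
        intro j x y hxy
        exact measure_mono (Set.Iio_subset_Iio hxy)
      have hφ : ∀ (j : Fin K) (x : ℝ), μ {ω | V j ω < x} = ρ j (Set.Iio x) := by
        intro j x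
        rw [← hVlaw j, Measure.map_apply (hV j) measurableSet_Iio]
        rfl
      have hg : Measurable (fun x => ρ j1 (Set.Iio x) *
          μ {ω | ∀ i, ¬(i = j1 ∨ i = j2) → V i ω < x}) :=
        Monotone.measurable fun x y hxy =>
          mul_le_mul' (hφmono j1 hxy) (hDmono hxy)
      calc ∫⁻ x, μ {ω | ∀ j, j ≠ j2 → V j ω < x} ∂(ρ j2)
          = ∫⁻ x, ρ j1 (Set.Iio x) * μ {ω | ∀ i, ¬(i = j1 ∨ i = j2) → V i ω < x} ∂(ρ j2) := by
            refine lintegral_congr fun x => ?_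
            rw [fact j2 j1 (Ne.symm hj) x, hφ j1 x]
            congr 2
            ext ω
            simp only [Set.mem_setOf_eq]
            constructor
            · intro h i hi; exact h i (by tauto)
            · intro h i hi; exact h i (by tauto)
        _ ≤ ∫⁻ x, ρ j1 (Set.Iio x) * μ {ω | ∀ i, ¬(i = j1 ∨ i = j2) → V i ω < x} ∂(ρ j1) := by
            refine RNM_rho_mono (hμs j1).1 hle (hμs j2).2 ν _ hg ?_
            intro x y hxy
            exact mul_le_mul' (hφmono j1 hxy) (hDmono hxy)
        _ ≤ ∫⁻ x, ρ j2 (Set.Iio x) * μ {ω | ∀ i, ¬(i = j1 ∨ i = j2) → V i ω < x} ∂(ρ j1) := by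
            refine lintegral_mono fun x => ?_
            exact mul_le_mul_left (RNM_rho_cdf (hμs j1).1 hle (hμs j2).2 ν x) _
        _ = ∫⁻ x, μ {ω | ∀ j, j ≠ j1 → V j ω < x} ∂(ρ j1) := by
            refine lintegral_congr fun x => ?_
            rw [fact j1 j2 hj x, hφ j2 x]
      -- done
  refine ⟨part1, ?_⟩
  -- Part (ii)
  intro hmono j
  set E : Fin K → Set Ω := fun i => {ω | ∀ i', i' ≠ i → -G i' ω + Q i' ω < -G i ω + Q i ω}
    with hEdef
  have hEmeas : ∀ i, MeasurableSet (E i) := by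
    intro i
    refine RNM_measSet_forall_lt (fun i' ω => -G i' ω + Q i' ω)
      (fun i' => (hG i').neg.add (hQ i')) _ ((hG i).neg.add (hQ i)) _
  have hEdisj : (↑(Finset.Iic j) : Set (Fin K)).PairwiseDisjoint E := by
    intro i1 _ i2 _ h12
    refine Set.disjoint_left.mpr fun ω h1 h2 => ?_
    exact lt_asymm (h1 i2 (Ne.symm h12)) (h2 i1 h12)
  have hcard : (Finset.Iic j).card = (j : ℕ) + 1 := by exact Fin.card_Iic j
  have hsum : ∑ i ∈ Finset.Iic j, μ (E j) ≤ 1 := by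
    calc ∑ i ∈ Finset.Iic j, μ (E j) ≤ ∑ i ∈ Finset.Iic j, μ (E i) := by
          refine Finset.sum_le_sum fun i hi => ?_
          exact part1 i j (hmono (Finset.mem_Iic.mp hi))
      _ = μ (⋃ i ∈ Finset.Iic j, E i) :=
          (measure_biUnion_finset hEdisj fun i _ => hEmeas i).symm
      _ ≤ 1 := prob_le_one
  rw [Finset.sum_const, hcard, nsmul_eq_mul] at hsum
  rw [ENNReal.le_inv_iff_mul_le]
  calc μ (E j) * (((j : ℕ) : ℝ≥0∞) + 1) = (((j : ℕ) : ℝ≥0∞) + 1) * μ (E j) := mul_comm _ _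
    _ = (((j : ℕ) + 1 : ℕ) : ℝ≥0∞) * μ (E j) := by push_cast; ring_nf
    _ ≤ 1 := hsum
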